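/- For the quantum matrix A_q of GL_q(2), the noncommutative characteristic polynomial for the first row is Φ₁(λ) = λ² - (a_{11} + q^{-1}a_{22})λ + q^{-1}a_{11}a_{22} - q^{-2}a_{12}a_{21}, i.e. A_q² - (a_{11}+q^{-1}a_{22})A_q + (q^{-1}a_{11}a_{22} - q^{-2}a_{12}a_{21})I has zero first row. -/
import Mathlib


/-- The noncommutative characteristic polynomial of the quantum matrix `A_q`
for the first row: `A_q² - (a₁₁ + q⁻¹a₂₂)A_q + (q⁻¹a₁₁a₂₂ - q⁻²a₁₂a₂₁)I`
has zero first row. -/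
theorem quantum_char_poly_first_row (R : Type*) [Ring R] (q a11 a12 a21 a22 : R)
    [Invertible q]
    (hqc : ∀ x : R, q * x = x * q)
    (h1 : a11 * a12 = ⅟q * (a12 * a11))
    (h2 : a11 * a21 = ⅟q * (a21 * a11))
    (h3 : a12 * a22 = ⅟q * (a22 * a12))
    (h4 : a21 * a22 = ⅟q * (a22 * a21))
    (h5 : a12 * a21 = a21 * a12)
    (h6 : a11 * a22 - a22 * a11 = (⅟q - q) * (a12 * a21)) :
    ∀ j : Fin 2,
      ((!![a11, a12; a21, a22] : Matrix (Fin 2) (Fin 2) R) ^ 2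
        - (a11 + ⅟q * a22) • !![a11, a12; a21, a22]
        + (⅟q * (a11 * a22) - ⅟q * ⅟q * (a12 * a21)) • (1 : Matrix (Fin 2) (Fin 2) R))
        0 j = 0 := by
  have e6 : a11 * a22 = (⅟q - q) * (a12 * a21) + a22 * a11 :=
    eq_add_of_sub_eq h6
  have e6' : ⅟q * (a11 * a22)
      = ⅟q * ⅟q * (a12 * a21) - a12 * a21 + ⅟q * (a22 * a11) := by
    calc ⅟q * (a11 * a22) = ⅟q * ((⅟q - q) * (a12 * a21) + a22 * a11) := by rw [← e6]
      _ = (⅟q * (⅟q - q)) * (a12 * a21) + ⅟q * (a22 * a11) := by noncomm_ring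
      _ = (⅟q * ⅟q - 1) * (a12 * a21) + ⅟q * (a22 * a11) := by
            rw [mul_sub, invOf_mul_self]
      _ = _ := by noncomm_ring
  intro j
  fin_cases j <;>
    simp [pow_two, Matrix.mul_apply, Fin.sum_univ_two, Matrix.one_apply]
  · rw [e6']; noncomm_ring
  · rw [h3]; noncomm_ring
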